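/- arXiv:1801.09843 — 3 statements merged into one kernel-verified Lean document; each statement's English description precedes it below -/
import Mathlib

section
/- If K ∈ H¹(ℝ), then the linear operator B₄ on L²(ℝ) defined by (B₄u)(x) = ∫_ℝ (K(x-x') - K(-x'))/x · u(x') dx' is bounded, with operator norm at most 2√2·‖K‖_{H¹}, where ‖K‖_{H¹}² = ‖K‖_{L²}² + ‖D¹K‖_{L²}². -/
open MeasureTheory Set

lemma myCS (φ ψ : ℝ → ℝ) (hφ : MemLp φ 2 volume) (hψ : MemLp ψ 2 volume) :
    |∫ x, φ x * ψ x| ≤ (eLpNorm φ 2 volume).toReal * (eLpNorm ψ 2 volume).toReal := by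
  set F : Lp ℝ 2 volume := hφ.toLp φ
  set G : Lp ℝ 2 volume := hψ.toLp ψ
  have h1 : (∫ x, φ x * ψ x) = @inner ℝ _ _ F G := by
    rw [L2.inner_def]
    refine integral_congr_ae ?_
    filter_upwards [hφ.coeFn_toLp, hψ.coeFn_toLp] with x h1 h2
    simp [F, G, h1, h2, mul_comm]
  rw [h1]
  calc |@inner ℝ _ _ F G| ≤ ‖F‖ * ‖G‖ := abs_real_inner_le_norm F G
    _ = _ := by rw [Lp.norm_toLp, Lp.norm_toLp]

-- product of L2 is integrable
lemma myMul (φ ψ : ℝ → ℝ) (hφ : MemLp φ 2 volume) (hψ : MemLp ψ 2 volume) :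
    Integrable (fun x => φ x * ψ x) volume := by
  have := L2.integrable_inner (𝕜 := ℝ) (hφ.toLp φ) (hψ.toLp ψ)
  refine this.congr ?_
  filter_upwards [hφ.coeFn_toLp, hψ.coeFn_toLp] with x h1 h2
  simp [h1, h2, mul_comm]

-- translation invariance
lemma myTrans (φ : ℝ → ℝ) (hφ : MemLp φ 2 volume) (c : ℝ) :
    MemLp (fun y => φ (c - y)) 2 volume ∧
      eLpNorm (fun y => φ (c - y)) 2 volume = eLpNorm φ 2 volume := by
  have hmp : MeasurePreserving (fun y : ℝ => c - y) volume volume :=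
    Measure.measurePreserving_sub_left volume c
  have he : eLpNorm (fun y => φ (c - y)) 2 volume = eLpNorm φ 2 volume :=
    eLpNorm_comp_measurePreserving hφ.aestronglyMeasurable hmp
  refine ⟨⟨hφ.aestronglyMeasurable.comp_quasiMeasurePreserving hmp.quasiMeasurePreserving, ?_⟩, he⟩
  rw [he]; exact hφ.2

lemma myIB (φ ψ : ℝ → ℝ) (hφ : MemLp φ 2 volume) (hψ : MemLp ψ 2 volume) (c : ℝ) :
    |∫ x', φ (c - x') * ψ x'| ≤ (eLpNorm φ 2 volume).toReal * (eLpNorm ψ 2 volume).toReal := by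
  obtain ⟨hm, he⟩ := myTrans φ hφ c
  calc |∫ x', φ (c - x') * ψ x'| ≤ (eLpNorm (fun y => φ (c - y)) 2 volume).toReal *
        (eLpNorm ψ 2 volume).toReal := myCS _ ψ hm hψ
    _ = _ := by rw [he]

lemma myIBnorm (φ ψ : ℝ → ℝ) (hφ : MemLp φ 2 volume) (hψ : MemLp ψ 2 volume) (c : ℝ) :
    ∫ x', ‖φ (c - x') * ψ x'‖ ≤ (eLpNorm φ 2 volume).toReal * (eLpNorm ψ 2 volume).toReal := by
  have hφ' : MemLp (fun y => |φ y|) 2 volume := by simpa [Real.norm_eq_abs] using hφ.norm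
  have hψ' : MemLp (fun y => |ψ y|) 2 volume := by simpa [Real.norm_eq_abs] using hψ.norm
  have h := myIB _ _ hφ' hψ' c
  have e1 : eLpNorm (fun y => |φ y|) 2 volume = eLpNorm φ 2 volume := by
    simpa [Real.norm_eq_abs] using eLpNorm_norm (p := 2) (μ := (volume : Measure ℝ)) φ
  have e2 : eLpNorm (fun y => |ψ y|) 2 volume = eLpNorm ψ 2 volume := by
    simpa [Real.norm_eq_abs] using eLpNorm_norm (p := 2) (μ := (volume : Measure ℝ)) ψ
  rw [e1, e2] at h
  have heq : (∫ x', ‖φ (c - x') * ψ x'‖) = ∫ x', |φ (c - x')| * |ψ x'| := by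
    simp [Real.norm_eq_abs, abs_mul]
  rw [heq]
  exact le_trans (le_abs_self _) h

lemma mySwap (φ ψ : ℝ → ℝ) (hφm : StronglyMeasurable φ) (hψm : StronglyMeasurable ψ)
    (hφ : MemLp φ 2 volume) (hψ : MemLp ψ 2 volume) (a b : ℝ) :
    ∫ x', (∫ s in Set.Ioc a b, φ (s - x')) * ψ x'
      = ∫ s in Set.Ioc a b, ∫ x', φ (s - x') * ψ x' := by
  have hF : StronglyMeasurable (fun p : ℝ × ℝ => φ (p.1 - p.2) * ψ p.2) :=
    (hφm.comp_measurable (measurable_fst.sub measurable_snd)).mul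
      (hψm.comp_measurable measurable_snd)
  have hInt : Integrable (fun p : ℝ × ℝ => φ (p.1 - p.2) * ψ p.2)
      ((volume.restrict (Set.Ioc a b)).prod volume) := by
    rw [integrable_prod_iff hF.aestronglyMeasurable]
    constructor
    · exact Filter.Eventually.of_forall fun s =>
        myMul (fun y => φ (s - y)) ψ (myTrans φ hφ s).1 hψ
    · refine Integrable.mono' (integrable_const
        ((eLpNorm φ 2 volume).toReal * (eLpNorm ψ 2 volume).toReal))
        (hF.norm.integral_prod_right').aestronglyMeasurable
        (Filter.Eventually.of_forall fun s => ?_)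
      rw [Real.norm_eq_abs, abs_of_nonneg (integral_nonneg fun x' => norm_nonneg _)]
      exact myIBnorm φ ψ hφ hψ s
  have hsw := integral_integral_swap (f := fun s x' => φ (s - x') * ψ x')
      (μ := volume.restrict (Set.Ioc a b)) (ν := volume) hInt
  calc ∫ x', (∫ s in Set.Ioc a b, φ (s - x')) * ψ x'
      = ∫ x', ∫ s in Set.Ioc a b, φ (s - x') * ψ x' := by
        refine integral_congr_ae (Filter.Eventually.of_forall fun x' => ?_)
        exact (integral_mul_const _ _).symm
    _ = _ := hsw.symm

-- Bound B: interval-integral kernel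
lemma myBoundB (φ ψ : ℝ → ℝ) (hφm : StronglyMeasurable φ) (hψm : StronglyMeasurable ψ)
    (hφ : MemLp φ 2 volume) (hψ : MemLp ψ 2 volume) (x : ℝ) :
    |∫ x', (∫ s in (0:ℝ)..x, φ (s - x')) * ψ x'|
      ≤ |x| * ((eLpNorm φ 2 volume).toReal * (eLpNorm ψ 2 volume).toReal) := by
  set P := (eLpNorm φ 2 volume).toReal * (eLpNorm ψ 2 volume).toReal with hP
  have hP0 : 0 ≤ P := mul_nonneg ENNReal.toReal_nonneg ENNReal.toReal_nonneg
  have hsm : AEStronglyMeasurable (fun s : ℝ => ∫ x', φ (s - x') * ψ x') (volume.restrict (Set.Ioc x 0)) ∧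
      AEStronglyMeasurable (fun s : ℝ => ∫ x', φ (s - x') * ψ x') (volume.restrict (Set.Ioc 0 x)) := by
    have : StronglyMeasurable (fun s : ℝ => ∫ x', φ (s - x') * ψ x') :=
      ((hφm.comp_measurable (measurable_fst.sub measurable_snd)).mul
        (hψm.comp_measurable measurable_snd)).integral_prod_right'
    exact ⟨this.aestronglyMeasurable, this.aestronglyMeasurable⟩
  rcases le_or_gt 0 x with hx | hx
  · have h1 : ∀ x' : ℝ, (∫ s in (0:ℝ)..x, φ (s - x')) = ∫ s in Set.Ioc 0 x, φ (s - x') :=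
      fun x' => intervalIntegral.integral_of_le hx
    simp only [h1]
    rw [mySwap φ ψ hφm hψm hφ hψ 0 x]
    have := norm_setIntegral_le_of_norm_le_const (μ := volume) (s := Set.Ioc 0 x)
      (f := fun s => ∫ x', φ (s - x') * ψ x') (C := P)
      (by rw [Real.volume_Ioc]; exact ENNReal.ofReal_lt_top)
      (fun s _ => by simpa [Real.norm_eq_abs] using myIB φ ψ hφ hψ s)
    rw [Real.norm_eq_abs] at this
    calc |∫ s in Set.Ioc 0 x, ∫ x', φ (s - x') * ψ x'| ≤ P * (volume (Set.Ioc 0 x)).toReal := this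
      _ = |x| * P := by
          rw [Real.volume_Ioc, ENNReal.toReal_ofReal (by linarith)]
          rw [abs_of_nonneg hx]; ring
  · have h1 : ∀ x' : ℝ, (∫ s in (0:ℝ)..x, φ (s - x')) = -∫ s in Set.Ioc x 0, φ (s - x') := by
      intro x'
      rw [intervalIntegral.integral_symm x 0, intervalIntegral.integral_of_le hx.le]
    simp only [h1, neg_mul]
    rw [integral_neg, abs_neg]
    rw [mySwap φ ψ hφm hψm hφ hψ x 0]
    have := norm_setIntegral_le_of_norm_le_const (μ := volume) (s := Set.Ioc x 0)
      (f := fun s => ∫ x', φ (s - x') * ψ x') (C := P)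
      (by rw [Real.volume_Ioc]; exact ENNReal.ofReal_lt_top)
      (fun s _ => by simpa [Real.norm_eq_abs] using myIB φ ψ hφ hψ s)
    rw [Real.norm_eq_abs] at this
    calc |∫ s in Set.Ioc x 0, ∫ x', φ (s - x') * ψ x'| ≤ P * (volume (Set.Ioc x 0)).toReal := this
      _ = |x| * P := by
          rw [Real.volume_Ioc, ENNReal.toReal_ofReal (by linarith)]
          rw [abs_of_neg hx]; ring

-- Bound A
lemma myBoundA (φ ψ : ℝ → ℝ) (hφ : MemLp φ 2 volume) (hψ : MemLp ψ 2 volume) (x : ℝ) :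
    |∫ x', (φ (x - x') - φ (-x')) * ψ x'|
      ≤ 2 * (eLpNorm φ 2 volume).toReal * (eLpNorm ψ 2 volume).toReal := by
  have h0 : (fun y : ℝ => φ (0 - y)) = fun y : ℝ => φ (-y) := by funext y; rw [zero_sub]
  have hm1 := (myTrans φ hφ x).1
  have hm2 : MemLp (fun y : ℝ => φ (-y)) 2 volume := h0 ▸ (myTrans φ hφ 0).1
  have he2 : eLpNorm (fun y : ℝ => φ (-y)) 2 volume = eLpNorm φ 2 volume :=
    h0 ▸ (myTrans φ hφ 0).2
  have hv : MemLp (fun x' => φ (x - x') - φ (-x')) 2 volume := hm1.sub hm2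
  have hcs := myCS _ ψ hv hψ
  refine le_trans hcs (mul_le_mul_of_nonneg_right ?_ ENNReal.toReal_nonneg)
  have htri : eLpNorm (fun x' => φ (x - x') - φ (-x')) 2 volume
      ≤ eLpNorm (fun y => φ (x - y)) 2 volume + eLpNorm (fun y : ℝ => φ (-y)) 2 volume :=
    eLpNorm_sub_le hm1.aestronglyMeasurable hm2.aestronglyMeasurable (by norm_num)
  rw [(myTrans φ hφ x).2, he2] at htri
  have hfin : eLpNorm φ 2 volume ≠ ⊤ := hφ.2.ne
  calc (eLpNorm (fun x' => φ (x - x') - φ (-x')) 2 volume).toReal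
      ≤ (eLpNorm φ 2 volume + eLpNorm φ 2 volume).toReal := by
        exact ENNReal.toReal_mono (by finiteness) htri
    _ = 2 * (eLpNorm φ 2 volume).toReal := by
        rw [ENNReal.toReal_add hfin hfin]; ring

lemma myQint (A B cU : ℝ) (hA : 0 < A) (hB : 0 < B) :
    IntegrableOn (fun x : ℝ => (cU * min B (2*A/x))^2) (Ioi 0) volume ∧
      ∫ x in Ioi (0:ℝ), (cU * min B (2*A/x))^2 ≤ 4*A*B*cU^2 := by
  set c := 2*A/B with hc
  have hc0 : 0 < c := by positivity
  set q : ℝ → ℝ := fun x => (cU * min B (2*A/x))^2 with hq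
  have h1 : IntegrableOn q (Ioc 0 c) volume := by
    refine IntegrableOn.congr_fun (f := fun _ => (cU*B)^2)
      (integrableOn_const (C := (cU*B)^2) (by rw [Real.volume_Ioc]; exact ENNReal.ofReal_ne_top))
      ?_ measurableSet_Ioc
    · intro x hx
      have hx0 : 0 < x := hx.1
      have : B ≤ 2*A/x := by
        rw [le_div_iff₀ hx0]
        calc B * x ≤ B * c := by nlinarith [hx.2]
          _ = 2*A := by rw [hc]; field_simp
      simp [hq, min_eq_left this]
  have h2' : IntegrableOn (fun x : ℝ => x ^ (-2:ℝ)) (Ioi c) volume :=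
    integrableOn_Ioi_rpow_of_lt (by norm_num) hc0
  have hqe : ∀ x ∈ Ioi c, (cU^2*(4*A^2)) * x ^ (-2:ℝ) = q x := by
    intro x hx
    have hx0 : 0 < x := hc0.trans hx
    have hmin : min B (2*A/x) = 2*A/x := by
      refine min_eq_right ?_
      rw [div_le_iff₀ hx0]
      calc 2*A = B * c := by rw [hc]; field_simp
        _ ≤ B * x := by nlinarith [le_of_lt (mem_Ioi.mp hx)]
    have hxp : x ^ (-2:ℝ) = (x^2)⁻¹ := by
      rw [Real.rpow_neg hx0.le, show ((2:ℝ)) = ((2:ℕ):ℝ) by norm_num, Real.rpow_natCast]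
    simp only [hq, hmin, hxp]
    field_simp
    ring
  have h2 : IntegrableOn q (Ioi c) volume := by
    refine IntegrableOn.congr_fun (h2'.const_mul (cU^2*(4*A^2))) hqe measurableSet_Ioi
  have hval2 : ∫ x in Ioi c, q x = cU^2*(4*A^2)/c := by
    rw [← setIntegral_congr_fun measurableSet_Ioi hqe]
    rw [integral_const_mul, integral_Ioi_rpow_of_lt (by norm_num) hc0]
    norm_num [Real.rpow_neg_one]
    ring
  have hsplit : Ioi (0:ℝ) = Ioc 0 c ∪ Ioi c := (Ioc_union_Ioi_eq_Ioi hc0.le).symm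
  have hdisj : Disjoint (Ioc (0:ℝ) c) (Ioi c) := by
    simp only [Set.disjoint_left, mem_Ioc, mem_Ioi]
    rintro a ⟨_, h2⟩ h3
    linarith
  constructor
  · rw [hsplit]; exact h1.union h2
  · rw [hsplit, setIntegral_union hdisj measurableSet_Ioi h1 h2]
    have hv1 : ∫ x in Ioc (0:ℝ) c, q x = (cU*B)^2 * c := by
      rw [setIntegral_congr_fun measurableSet_Ioc (fun x hx => ?_), setIntegral_const]
      · rw [Real.volume_real_Ioc_of_le (by linarith), smul_eq_mul, sub_zero, mul_comm]
      · have hx0 : 0 < x := hx.1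
        have : B ≤ 2*A/x := by
          rw [le_div_iff₀ hx0]
          calc B * x ≤ B * c := by nlinarith [hx.2]
            _ = 2*A := by rw [hc]; field_simp
        simp [hq, min_eq_left this]
    rw [hv1, hval2]
    have e1 : (cU*B)^2 * c = 2*A*B*cU^2 := by rw [hc]; field_simp
    have e2 : cU^2*(4*A^2)/c = 2*A*B*cU^2 := by rw [hc]; field_simp; ring
    rw [e1, e2]; linarith

lemma myG (A B cU : ℝ) (hA : 0 < A) (hB : 0 < B) (hcU : 0 ≤ cU) :
    MemLp (fun x : ℝ => cU * min B (2*A/|x|)) 2 volume ∧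
      eLpNorm (fun x : ℝ => cU * min B (2*A/|x|)) 2 volume ≤
        ENNReal.ofReal (2 * Real.sqrt 2 * Real.sqrt (A^2+B^2) * cU) := by
  obtain ⟨hqi, hqv⟩ := myQint A B cU hA hB
  set g : ℝ → ℝ := fun x => cU * min B (2*A/|x|) with hg
  set q : ℝ → ℝ := fun x => (cU * min B (2*A/x))^2 with hqdef
  have hgm : Measurable g :=
    measurable_const.mul (measurable_const.min (measurable_const.div continuous_abs.measurable))
  have hq' : (fun x : ℝ => (g x)^2) = fun x => q |x| := rfl
  have hint : Integrable (fun x : ℝ => (g x)^2) volume := by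
    rw [hq']
    have hIoi : IntegrableOn (fun x : ℝ => q |x|) (Ioi 0) volume := by
      refine IntegrableOn.congr_fun hqi (fun x hx => ?_) measurableSet_Ioi
      simp [abs_of_pos (mem_Ioi.mp hx)]
    have hIci : IntegrableOn (fun x : ℝ => q |x|) (Ici 0) volume := by
      rwa [integrableOn_Ici_iff_integrableOn_Ioi]
    have hIic : IntegrableOn (fun x : ℝ => q |x|) (Iic 0) volume := by
      have hemb : MeasurableEmbedding fun x : ℝ => -x :=
        (Homeomorph.neg ℝ).measurableEmbedding
      have := (Measure.measurePreserving_neg (volume : Measure ℝ)).integrableOn_comp_preimage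
        hemb (f := fun x : ℝ => q |x|) (s := Iic 0)
      rw [show (fun x : ℝ => -x) ⁻¹' Iic 0 = Ici 0 by ext y; simp] at this
      rw [← this]
      refine hIci.congr_fun (fun x _ => ?_) measurableSet_Ici
      simp [Function.comp]
    rw [← integrableOn_univ, ← Set.Iic_union_Ioi (a := (0:ℝ))]
    exact hIic.union hIoi
  have hmem : MemLp g 2 volume :=
    (memLp_two_iff_integrable_sq hgm.aestronglyMeasurable).2 hint
  refine ⟨hmem, ?_⟩
  have hval : ∫ x, (g x)^2 ≤ 8*A*B*cU^2 := by
    rw [hq', integral_comp_abs (f := q)]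
    linarith
  rw [hmem.eLpNorm_eq_integral_rpow_norm (by norm_num) (by norm_num)]
  have htr : (2:ENNReal).toReal = 2 := by norm_num
  rw [htr]
  have hnorm : (fun a : ℝ => ‖g a‖ ^ (2:ℝ)) = fun a => (g a)^2 := by
    funext a
    rw [show ((2:ℝ)) = ((2:ℕ):ℝ) by norm_num, Real.rpow_natCast]
    simp [Real.norm_eq_abs, sq_abs]
  rw [hnorm]
  apply ENNReal.ofReal_le_ofReal
  have hi0 : 0 ≤ ∫ x, (g x)^2 := integral_nonneg fun x => sq_nonneg _
  have hrs : (∫ x, (g x)^2) ^ ((2:ℝ))⁻¹ = Real.sqrt (∫ x, (g x)^2) := by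
    rw [Real.sqrt_eq_rpow]; norm_num
  rw [hrs]
  have s2 : Real.sqrt 2 ^ 2 = 2 := Real.sq_sqrt (by norm_num)
  have sAB : Real.sqrt (A^2+B^2) ^ 2 = A^2+B^2 := Real.sq_sqrt (by positivity)
  have hsq : 8*(A^2+B^2)*cU^2 = (2*Real.sqrt 2*Real.sqrt (A^2+B^2)*cU)^2 := by
    have : (2*Real.sqrt 2*Real.sqrt (A^2+B^2)*cU)^2
        = (Real.sqrt 2^2) * (Real.sqrt (A^2+B^2)^2) * (4*cU^2) := by ring
    rw [this, s2, sAB]; ring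
  calc Real.sqrt (∫ x, (g x)^2) ≤ Real.sqrt (8*(A^2+B^2)*cU^2) := by
        apply Real.sqrt_le_sqrt
        nlinarith [sq_nonneg (A-B), sq_nonneg cU]
    _ = 2*Real.sqrt 2*Real.sqrt (A^2+B^2)*cU := by
        rw [hsq, Real.sqrt_sq (by positivity)]

/-- If `K ∈ H¹(ℝ)` (i.e. `K ∈ L²` with weak derivative `K' ∈ L²`, expressed via
absolute continuity), then the operator
`(B₄ u)(x) = ∫ (K(x-x') - K(-x'))/x ⬝ u(x') dx'` maps `L²(ℝ)` into `L²(ℝ)` with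
norm at most `2√2 ⬝ ‖K‖_{H¹}`, where `‖K‖_{H¹}² = ‖K‖_{L²}² + ‖K'‖_{L²}²`. -/
theorem stmt3 (K K' : ℝ → ℝ)
    (hK : MemLp K 2 volume) (hK' : MemLp K' 2 volume)
    (hweak : ∀ x y : ℝ, K y - K x = ∫ t in x..y, K' t) :
    ∀ u : ℝ → ℝ, MemLp u 2 volume →
      MemLp (fun x : ℝ => ∫ x' : ℝ, (K (x - x') - K (-x')) / x * u x') 2 volume ∧
      eLpNorm (fun x : ℝ => ∫ x' : ℝ, (K (x - x') - K (-x')) / x * u x') 2 volume ≤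
        ENNReal.ofReal (2 * Real.sqrt 2 *
            Real.sqrt ((eLpNorm K 2 volume).toReal ^ 2 + (eLpNorm K' 2 volume).toReal ^ 2)) *
          eLpNorm u 2 volume := by
  intro u hu
  set A := (eLpNorm K 2 volume).toReal with hAdef
  set B := (eLpNorm K' 2 volume).toReal with hBdef
  set U := (eLpNorm u 2 volume).toReal with hUdef
  have hU0 : 0 ≤ U := ENNReal.toReal_nonneg
  -- measurable representatives
  set Km := hK.1.mk K with hKmdef
  have hKeq : K =ᵐ[volume] Km := hK.1.ae_eq_mk
  have hKsm : StronglyMeasurable Km := hK.1.stronglyMeasurable_mk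
  have hKmem : MemLp Km 2 volume := hK.ae_eq hKeq
  have hKnorm : eLpNorm Km 2 volume = eLpNorm K 2 volume := (eLpNorm_congr_ae hKeq).symm
  set K'm := hK'.1.mk K' with hK'mdef
  have hK'eq : K' =ᵐ[volume] K'm := hK'.1.ae_eq_mk
  have hK'sm : StronglyMeasurable K'm := hK'.1.stronglyMeasurable_mk
  have hK'mem : MemLp K'm 2 volume := hK'.ae_eq hK'eq
  have hK'norm : eLpNorm K'm 2 volume = eLpNorm K' 2 volume := (eLpNorm_congr_ae hK'eq).symm
  set um := hu.1.mk u with humdef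
  have hueq : u =ᵐ[volume] um := hu.1.ae_eq_mk
  have husm : StronglyMeasurable um := hu.1.stronglyMeasurable_mk
  have humem : MemLp um 2 volume := hu.ae_eq hueq
  have hunorm : eLpNorm um 2 volume = eLpNorm u 2 volume := (eLpNorm_congr_ae hueq).symm
  -- ae-eq of translates
  have hsubeq : ∀ x : ℝ, (fun x' => K (x - x')) =ᵐ[volume] fun x' => Km (x - x') := fun x =>
    (Measure.measurePreserving_sub_left volume x).quasiMeasurePreserving.ae_eq_comp hKeq
  have hnegeq : (fun x' : ℝ => K (-x')) =ᵐ[volume] fun x' => Km (-x') :=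
    (Measure.measurePreserving_neg volume).quasiMeasurePreserving.ae_eq_comp hKeq
  -- rewrite the target function
  set I : ℝ → ℝ := fun x => ∫ x', (Km (x - x') - Km (-x')) * um x' with hIdef
  have hfeq : (fun x : ℝ => ∫ x' : ℝ, (K (x - x') - K (-x')) / x * u x')
      = fun x => x⁻¹ * I x := by
    funext x
    rw [hIdef, ← integral_const_mul]
    refine integral_congr_ae ?_
    filter_upwards [hsubeq x, hnegeq, hueq] with x' h1 h2 h3
    simp only [h1, h2, h3]
    ring
  rw [hfeq]
  -- measurability of the target
  have hfsm : AEStronglyMeasurable (fun x => x⁻¹ * I x) volume := by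
    have hIsm : StronglyMeasurable I :=
      ((hKsm.comp_measurable (measurable_fst.sub measurable_snd)).sub
        (hKsm.comp_measurable measurable_snd.neg)).mul
          (husm.comp_measurable measurable_snd) |>.integral_prod_right'
    exact (measurable_inv.stronglyMeasurable.mul hIsm).aestronglyMeasurable
  -- degenerate case: K ≡ 0 a.e.
  by_cases hA0 : eLpNorm K 2 volume = 0
  · have hK0 : K =ᵐ[volume] 0 := (eLpNorm_eq_zero_iff hK.1 (by norm_num)).1 hA0
    have hKm0 : Km =ᵐ[volume] 0 := hKeq.symm.trans hK0
    have hI0 : ∀ x, I x = 0 := by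
      intro x
      rw [hIdef]
      have e1 : (fun x' => Km (x - x')) =ᵐ[volume] fun _ => (0:ℝ) :=
        (Measure.measurePreserving_sub_left volume x).quasiMeasurePreserving.ae_eq_comp hKm0
      have e2 : (fun x' : ℝ => Km (-x')) =ᵐ[volume] fun _ => (0:ℝ) :=
        (Measure.measurePreserving_neg volume).quasiMeasurePreserving.ae_eq_comp hKm0
      show (∫ x', (Km (x - x') - Km (-x')) * um x') = 0
      refine integral_eq_zero_of_ae ?_
      filter_upwards [e1, e2] with x' h1 h2
      simp [h1, h2]
    have hz : (fun x : ℝ => x⁻¹ * I x) = fun _ => (0:ℝ) := by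
      funext x; rw [hI0 x]; ring
    rw [hz]
    constructor
    · exact MemLp.zero
    · simp [eLpNorm_zero]
  -- degenerate case: K' ≡ 0 a.e. (then K is a.e.-zero constant)
  by_cases hB0 : eLpNorm K' 2 volume = 0
  · have hK'0 : K' =ᵐ[volume] 0 := (eLpNorm_eq_zero_iff hK'.1 (by norm_num)).1 hB0
    have hconst : ∀ y : ℝ, K y = K 0 := by
      intro y
      have h := hweak 0 y
      have hz : (∫ t in (0:ℝ)..y, K' t) = 0 := by
        rw [intervalIntegral.integral_congr_ae (g := fun _ => (0:ℝ))
          (by filter_upwards [hK'0] with t ht _ using ht)]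
        simp
      linarith [h, hz]
    have hK00 : K 0 = 0 := by
      by_contra hne
      have hKc : K = fun _ => K 0 := funext hconst
      have := hK.2
      rw [hKc, eLpNorm_const (K 0) (by norm_num) (NeZero.ne (volume : Measure ℝ))] at this
      rw [Real.volume_univ, ENNReal.top_rpow_of_pos (by norm_num)] at this
      rw [ENNReal.mul_top (by simpa using hne)] at this
      exact absurd this (by simp)
    have hKz : ∀ y : ℝ, K y = 0 := fun y => (hconst y).trans hK00
    have hz : (fun x : ℝ => x⁻¹ * I x) = fun _ => (0:ℝ) := by
      rw [← hfeq]
      funext x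
      have : ∀ x' : ℝ, (K (x - x') - K (-x')) / x * u x' = 0 := by
        intro x'; rw [hKz, hKz]; simp
      simp only [this, integral_zero]
    rw [hz]
    constructor
    · exact MemLp.zero
    · simp [eLpNorm_zero]
  -- main case
  have hA : 0 < A := ENNReal.toReal_pos hA0 hK.2.ne
  have hB : 0 < B := ENNReal.toReal_pos hB0 hK'.2.ne
  obtain ⟨hgmem, hgbound⟩ := myG A B U hA hB hU0
  -- pointwise bound
  have hbound : ∀ x : ℝ, |x⁻¹ * I x| ≤ U * min B (2*A/|x|) := by
    intro x
    rcases eq_or_ne x 0 with rfl | hx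
    · have h0 : U * min B (2*A/|(0:ℝ)|) = 0 := by
        rw [abs_zero, div_zero, min_eq_right hB.le, mul_zero]
      rw [h0, inv_zero, zero_mul, abs_zero]
    · have hxa : 0 < |x| := abs_pos.2 hx
      -- bound (i)
      have hbA : |I x| ≤ 2 * A * U := by
        have := myBoundA Km um hKmem humem x
        rwa [hKnorm, hunorm, ← hAdef, ← hUdef] at this
      -- bound (ii)
      have hIeq : I x = ∫ x', (∫ s in (0:ℝ)..x, K'm (s - x')) * um x' := by
        rw [hIdef]
        refine integral_congr_ae ?_
        filter_upwards [hsubeq x, hnegeq] with x' h1 h2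
        have e1 : (∫ s in (0:ℝ)..x, K'm (s - x')) = ∫ t in (0 - x')..(x - x'), K'm t :=
          intervalIntegral.integral_comp_sub_right (fun t => K'm t) x'
        have e2 : (∫ t in (-x')..(x - x'), K'm t) = ∫ t in (-x')..(x - x'), K' t :=
          intervalIntegral.integral_congr_ae
            (by filter_upwards [hK'eq] with t ht _ using ht.symm)
        rw [e1, zero_sub, e2, ← hweak (-x') (x - x'), ← h1, ← h2]
      have hbB : |I x| ≤ |x| * (B * U) := by
        rw [hIeq]
        have := myBoundB K'm um hK'sm husm hK'mem humem x
        rwa [hK'norm, hunorm, ← hBdef, ← hUdef] at this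
      rw [abs_mul, abs_inv]
      rw [mul_min_of_nonneg _ _ hU0]
      refine le_min ?_ ?_
      · have h1 : |x|⁻¹ * |I x| ≤ |x|⁻¹ * (|x| * (B * U)) :=
          mul_le_mul_of_nonneg_left hbB (inv_nonneg.2 (abs_nonneg x))
        have h2 : |x|⁻¹ * (|x| * (B * U)) = U * B := by
          field_simp [hxa.ne']
        linarith
      · have h1 : |x|⁻¹ * |I x| ≤ |x|⁻¹ * (2 * A * U) :=
          mul_le_mul_of_nonneg_left hbA (inv_nonneg.2 (abs_nonneg x))
        have h2 : |x|⁻¹ * (2 * A * U) = U * (2*A/|x|) := by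
          field_simp [hxa.ne']
        linarith
  have hle : ∀ᵐ x ∂(volume : Measure ℝ),
      ‖x⁻¹ * I x‖ ≤ ‖U * min B (2*A/|x|)‖ := by
    refine .of_forall fun x => ?_
    rw [Real.norm_eq_abs, Real.norm_eq_abs]
    exact le_trans (hbound x) (le_abs_self _)
  constructor
  · exact hgmem.of_le hfsm hle
  · have h1 : eLpNorm (fun x => x⁻¹ * I x) 2 volume
        ≤ eLpNorm (fun x : ℝ => U * min B (2*A/|x|)) 2 volume := eLpNorm_mono_ae hle
    refine le_trans (le_trans h1 hgbound) ?_
    have hCnn : (0:ℝ) ≤ 2 * Real.sqrt 2 * Real.sqrt (A^2+B^2) := by positivity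
    have hUeq : eLpNorm u 2 volume = ENNReal.ofReal U := (ENNReal.ofReal_toReal hu.2.ne).symm
    rw [hUeq, ← ENNReal.ofReal_mul hCnn]
end

section
/- Suppose K : ℝ → ℝ has weak derivative D¹K ∈ L²(ℝ) that is Lipschitz continuous with constant k₂. Then h(x) = ∫₀^∞ (K(x-x') - K(x+x'))/x' dx' is Lipschitz continuous with Lipschitz constant 2(k₂ + ‖D¹K‖_{L²}). -/
open MeasureTheory Set

private lemma holder_tail' (g : ℝ → ℝ) (hg : AEStronglyMeasurable g volume) :
    ∫⁻ x in Set.Ioi (1:ℝ), ENNReal.ofReal |g x| * ENNReal.ofReal x⁻¹ ≤ eLpNorm g 2 volume := by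
  have h2 : Real.HolderConjugate 2 2 := Real.HolderConjugate.two_two
  have hf1 : AEMeasurable (fun x => ENNReal.ofReal |g x|) (volume.restrict (Set.Ioi (1:ℝ))) :=
    (hg.restrict.norm.aemeasurable.ennreal_ofReal).congr
      (Filter.EventuallyEq.of_eq (by funext x; simp [Real.norm_eq_abs]))
  have hf2 : AEMeasurable (fun x : ℝ => ENNReal.ofReal x⁻¹) (volume.restrict (Set.Ioi (1:ℝ))) :=
    (measurable_inv.ennreal_ofReal).aemeasurable
  have hsecond : (∫⁻ x in Set.Ioi (1:ℝ), ENNReal.ofReal x⁻¹ ^ (2:ℝ)) = 1 := by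
    have heq : ∀ x ∈ Set.Ioi (1:ℝ), ENNReal.ofReal x⁻¹ ^ (2:ℝ) = ENNReal.ofReal (x ^ (-2:ℝ)) := by
      intro x hx
      have hx0 : (0:ℝ) < x := lt_trans one_pos hx
      rw [ENNReal.ofReal_rpow_of_pos (inv_pos.mpr hx0)]
      congr 1
      rw [Real.inv_rpow hx0.le, ← Real.rpow_neg hx0.le]
    rw [setLIntegral_congr_fun measurableSet_Ioi heq]
    rw [← ofReal_integral_eq_lintegral_ofReal (integrableOn_Ioi_rpow_of_lt (by norm_num) one_pos)
      ((ae_restrict_iff' measurableSet_Ioi).2 (Filter.Eventually.of_forall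
        (fun x hx => Real.rpow_nonneg (le_of_lt (lt_trans one_pos hx)) _)))]
    rw [integral_Ioi_rpow_of_lt (by norm_num) one_pos]
    norm_num
  have hfirst : (∫⁻ x in Set.Ioi (1:ℝ), ENNReal.ofReal |g x| ^ (2:ℝ)) ^ (1/(2:ℝ)) ≤
      eLpNorm g 2 volume := by
    have heq : ∀ x : ℝ, ENNReal.ofReal |g x| ^ (2:ℝ) = ‖g x‖ₑ ^ (2:ℝ) := by
      intro x; rw [← Real.norm_eq_abs, ofReal_norm]
    rw [eLpNorm_eq_lintegral_rpow_enorm_toReal (by norm_num) (by norm_num)]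
    simp only [ENNReal.toReal_ofNat]
    simp only [heq]
    exact ENNReal.rpow_le_rpow (setLIntegral_le_lintegral _ _) (by norm_num)
  calc ∫⁻ x in Set.Ioi (1:ℝ), ENNReal.ofReal |g x| * ENNReal.ofReal x⁻¹
      ≤ (∫⁻ x in Set.Ioi (1:ℝ), ENNReal.ofReal |g x| ^ (2:ℝ)) ^ (1/(2:ℝ)) *
        (∫⁻ x in Set.Ioi (1:ℝ), ENNReal.ofReal x⁻¹ ^ (2:ℝ)) ^ (1/(2:ℝ)) :=
        ENNReal.lintegral_mul_le_Lp_mul_Lq _ h2 hf1 hf2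
    _ = (∫⁻ x in Set.Ioi (1:ℝ), ENNReal.ofReal |g x| ^ (2:ℝ)) ^ (1/(2:ℝ)) := by
        rw [hsecond, ENNReal.one_rpow, mul_one]
    _ ≤ eLpNorm g 2 volume := hfirst

private lemma J_bound' (F : ℝ → ℝ → ℝ) (hF : Continuous fun p : ℝ × ℝ => F p.1 p.2)
    (x₁ x₂ : ℝ) (E : ENNReal)
    (hEach : ∀ t : ℝ, ∫⁻ x in Set.Ioi (1:ℝ),
        ENNReal.ofReal |F t x| * ENNReal.ofReal x⁻¹ ≤ E) :
    ∫⁻ x' in Set.Ioi (1:ℝ),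
        (∫⁻ t in Set.Ioc x₁ x₂, ENNReal.ofReal |F t x'|) * ENNReal.ofReal x'⁻¹
      ≤ volume (Set.Ioc x₁ x₂) * E := by
  have hmeas : Measurable fun p : ℝ × ℝ =>
      ENNReal.ofReal |F p.2 p.1| * ENNReal.ofReal p.1⁻¹ := by
    apply Measurable.fun_mul
    · exact ((hF.comp (continuous_snd.prodMk continuous_fst)).abs).measurable.ennreal_ofReal
    · exact (measurable_fst.inv).ennreal_ofReal
  calc ∫⁻ x' in Set.Ioi (1:ℝ),
        (∫⁻ t in Set.Ioc x₁ x₂, ENNReal.ofReal |F t x'|) * ENNReal.ofReal x'⁻¹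
      = ∫⁻ x' in Set.Ioi (1:ℝ), ∫⁻ t in Set.Ioc x₁ x₂,
          ENNReal.ofReal |F t x'| * ENNReal.ofReal x'⁻¹ := by
        refine lintegral_congr fun x' => ?_
        rw [lintegral_mul_const]
        exact ((hF.comp (continuous_id.prodMk continuous_const)).abs).measurable.ennreal_ofReal
    _ = ∫⁻ t in Set.Ioc x₁ x₂, ∫⁻ x' in Set.Ioi (1:ℝ),
          ENNReal.ofReal |F t x'| * ENNReal.ofReal x'⁻¹ :=
        lintegral_lintegral_swap hmeas.aemeasurable
    _ ≤ ∫⁻ _t in Set.Ioc x₁ x₂, E := lintegral_mono' le_rfl (fun t => hEach t)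
    _ = volume (Set.Ioc x₁ x₂) * E := by rw [setLIntegral_const]; ring

/-- If `K : ℝ → ℝ` has weak derivative `K' ∈ L²(ℝ)` (expressed via absolute
continuity) which is Lipschitz with constant `k₂`, then
`h(x) = ∫₀^∞ (K(x-x') - K(x+x'))/x' dx'` is Lipschitz with constant
`2 (k₂ + ‖K'‖_{L²})`. -/
theorem stmt5 (K K' : ℝ → ℝ) (k₂ : ℝ)
    (hK' : MemLp K' 2 volume)
    (hweak : ∀ x y : ℝ, K y - K x = ∫ t in x..y, K' t)
    (hLip : ∀ a b : ℝ, |K' a - K' b| ≤ k₂ * |a - b|) :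
    ∀ x₁ x₂ : ℝ,
      |(∫ x' in Set.Ioi (0:ℝ), (K (x₂ - x') - K (x₂ + x')) / x') -
          ∫ x' in Set.Ioi (0:ℝ), (K (x₁ - x') - K (x₁ + x')) / x'| ≤
        2 * (k₂ + (eLpNorm K' 2 volume).toReal) * |x₂ - x₁| := by
  have hk₂ : 0 ≤ k₂ := by
    have h := hLip 0 1
    simp at h
    exact le_trans (abs_nonneg _) h
  have hK'cont : Continuous K' := by
    have : LipschitzWith ⟨k₂, hk₂⟩ K' :=
      LipschitzWith.of_dist_le_mul fun a b => by
        rw [Real.dist_eq, Real.dist_eq]; exact hLip a b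
    exact this.continuous
  have hKcont : Continuous K := by
    have hrep : K = fun y => K 0 + ∫ t in (0:ℝ)..y, K' t := by
      funext y; have := hweak 0 y; linarith
    rw [hrep]
    exact continuous_const.add
      (intervalIntegral.continuous_primitive (fun a b => hK'cont.intervalIntegrable a b) 0)
  set N : ℝ := (eLpNorm K' 2 volume).toReal with hNdef
  have hNnn : 0 ≤ N := ENNReal.toReal_nonneg
  have hNe : eLpNorm K' 2 volume = ENNReal.ofReal N :=
    (ENNReal.ofReal_toReal hK'.2.ne).symm
  intro x₁ x₂
  wlog hle : x₁ ≤ x₂ generalizing x₁ x₂ with H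
  · have h := H x₂ x₁ (le_of_not_ge hle)
    rw [abs_sub_comm, show |x₂ - x₁| = |x₁ - x₂| from abs_sub_comm _ _]
    exact h
  set D : ℝ := x₂ - x₁ with hDdef
  have hDnn : 0 ≤ D := by simp [hDdef]; linarith
  set f₁ : ℝ → ℝ := fun x' => (K (x₁ - x') - K (x₁ + x')) / x' with hf₁def
  set f₂ : ℝ → ℝ := fun x' => (K (x₂ - x') - K (x₂ + x')) / x' with hf₂def
  set g : ℝ → ℝ := fun x' => f₂ x' - f₁ x' with hg_def
  -- pointwise identity
  have hg_eq : ∀ x' : ℝ, g x' =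
      ((∫ t in x₁..x₂, K' (t - x')) - ∫ t in x₁..x₂, K' (t + x')) / x' := by
    intro x'
    rw [hg_def]
    simp only [hf₁def, hf₂def]
    rw [div_sub_div_same]
    congr 1
    have h1 := hweak (x₁ - x') (x₂ - x')
    have h2 := hweak (x₁ + x') (x₂ + x')
    rw [intervalIntegral.integral_comp_sub_right (fun t => K' t) x',
        intervalIntegral.integral_comp_add_right (fun t => K' t) x']
    linarith
  -- head bound
  have hhead : ∀ x' ∈ Set.Ioi (0:ℝ), |g x'| ≤ 2 * k₂ * D := by
    intro x' hx'
    have hx0 : (0:ℝ) < x' := hx'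
    have hA : IntervalIntegrable (fun t => K' (t - x')) volume x₁ x₂ :=
      (hK'cont.comp (continuous_sub_right x')).intervalIntegrable _ _
    have hB : IntervalIntegrable (fun t => K' (t + x')) volume x₁ x₂ :=
      (hK'cont.comp (continuous_add_right x')).intervalIntegrable _ _
    have hint : g x' = (∫ t in x₁..x₂, (K' (t - x') - K' (t + x'))) / x' := by
      rw [hg_eq x']
      congr 1
      exact (intervalIntegral.integral_sub hA hB).symm
    have hbound : |∫ t in x₁..x₂, (K' (t - x') - K' (t + x'))| ≤ (k₂ * (2 * x')) * |x₂ - x₁| := by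
      rw [← Real.norm_eq_abs]
      apply intervalIntegral.norm_integral_le_of_norm_le_const
      intro t _
      rw [Real.norm_eq_abs]
      calc |K' (t - x') - K' (t + x')| ≤ k₂ * |(t - x') - (t + x')| := hLip _ _
        _ = k₂ * (2 * x') := by rw [show (t - x') - (t + x') = -(2*x') by ring, abs_neg,
              abs_of_pos (by linarith)]
    rw [hint, abs_div, abs_of_pos hx0, div_le_iff₀ hx0]
    calc |∫ t in x₁..x₂, (K' (t - x') - K' (t + x'))| ≤ (k₂ * (2 * x')) * |x₂ - x₁| := hbound
      _ = 2 * k₂ * D * x' := by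
          rw [show |x₂ - x₁| = D by rw [hDdef]; exact abs_of_nonneg (by linarith)]; ring
  -- tail pointwise bound
  have htail : ∀ x' ∈ Set.Ioi (1:ℝ), ENNReal.ofReal |g x'| ≤
      (∫⁻ t in Set.Ioc x₁ x₂, ENNReal.ofReal |K' (t - x')|) * ENNReal.ofReal x'⁻¹ +
      (∫⁻ t in Set.Ioc x₁ x₂, ENNReal.ofReal |K' (t + x')|) * ENNReal.ofReal x'⁻¹ := by
    intro x' hx'
    have hx0 : (0:ℝ) < x' := lt_trans one_pos hx'
    set A := ∫ t in Set.Ioc x₁ x₂, |K' (t - x')| with hA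
    set B := ∫ t in Set.Ioc x₁ x₂, |K' (t + x')| with hB
    have hAnn : 0 ≤ A := integral_nonneg fun t => abs_nonneg _
    have hBnn : 0 ≤ B := integral_nonneg fun t => abs_nonneg _
    have hibA : IntegrableOn (fun t => |K' (t - x')|) (Set.Ioc x₁ x₂) volume :=
      ((hK'cont.comp (continuous_sub_right x')).abs).integrableOn_Ioc
    have hibB : IntegrableOn (fun t => |K' (t + x')|) (Set.Ioc x₁ x₂) volume :=
      ((hK'cont.comp (continuous_add_right x')).abs).integrableOn_Ioc
    have hreal : |g x'| ≤ (A + B) * x'⁻¹ := by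
      rw [hg_eq, abs_div, abs_of_pos hx0, div_eq_mul_inv]
      apply mul_le_mul_of_nonneg_right _ (inv_nonneg.mpr hx0.le)
      calc |(∫ t in x₁..x₂, K' (t - x')) - ∫ t in x₁..x₂, K' (t + x')|
          ≤ |∫ t in x₁..x₂, K' (t - x')| + |∫ t in x₁..x₂, K' (t + x')| := abs_sub _ _
        _ ≤ A + B := by
            apply add_le_add
            · rw [intervalIntegral.integral_of_le hle, ← Real.norm_eq_abs]
              exact (norm_integral_le_integral_norm _).trans (le_of_eq (by simp [Real.norm_eq_abs, hA]))
            · rw [intervalIntegral.integral_of_le hle, ← Real.norm_eq_abs]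
              exact (norm_integral_le_integral_norm _).trans (le_of_eq (by simp [Real.norm_eq_abs, hB]))
    calc ENNReal.ofReal |g x'| ≤ ENNReal.ofReal ((A + B) * x'⁻¹) := ENNReal.ofReal_le_ofReal hreal
      _ = (ENNReal.ofReal A + ENNReal.ofReal B) * ENNReal.ofReal x'⁻¹ := by
          rw [ENNReal.ofReal_mul (by positivity), ENNReal.ofReal_add hAnn hBnn]
      _ = _ := by
          rw [add_mul]
          congr 1
          · congr 1
            rw [hA, ofReal_integral_eq_lintegral_ofReal hibA
              (Filter.Eventually.of_forall fun t => abs_nonneg _)]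
          · congr 1
            rw [hB, ofReal_integral_eq_lintegral_ofReal hibB
              (Filter.Eventually.of_forall fun t => abs_nonneg _)]
  -- key lintegral bound
  have hkey : ∫⁻ x' in Set.Ioi (0:ℝ), ENNReal.ofReal |g x'| ≤
      ENNReal.ofReal (2 * (k₂ + N) * D) := by
    have hsplit : ∫⁻ x' in Set.Ioi (0:ℝ), ENNReal.ofReal |g x'| =
        (∫⁻ x' in Set.Ioc (0:ℝ) 1, ENNReal.ofReal |g x'|) +
        ∫⁻ x' in Set.Ioi (1:ℝ), ENNReal.ofReal |g x'| := by
      rw [← Set.Ioc_union_Ioi_eq_Ioi (zero_le_one (α := ℝ)),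
        lintegral_union measurableSet_Ioi Set.Ioc_disjoint_Ioi_same]
    have hheadI : (∫⁻ x' in Set.Ioc (0:ℝ) 1, ENNReal.ofReal |g x'|) ≤
        ENNReal.ofReal (2 * k₂ * D) := by
      calc (∫⁻ x' in Set.Ioc (0:ℝ) 1, ENNReal.ofReal |g x'|)
          ≤ ∫⁻ _x' in Set.Ioc (0:ℝ) 1, ENNReal.ofReal (2 * k₂ * D) := by
            apply lintegral_mono_ae
            filter_upwards [ae_restrict_mem measurableSet_Ioc] with x' hx'
            exact ENNReal.ofReal_le_ofReal (hhead x' hx'.1)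
        _ = ENNReal.ofReal (2 * k₂ * D) := by
            rw [setLIntegral_const, Real.volume_Ioc]
            norm_num
    have hEach1 : ∀ t : ℝ, ∫⁻ x in Set.Ioi (1:ℝ),
        ENNReal.ofReal |K' (t - x)| * ENNReal.ofReal x⁻¹ ≤ eLpNorm K' 2 volume := by
      intro t
      refine le_trans (holder_tail' (fun x => K' (t - x))
        ((hK'cont.comp (continuous_sub_left t)).aestronglyMeasurable)) (le_of_eq ?_)
      exact eLpNorm_comp_measurePreserving hK'.1 (Measure.measurePreserving_sub_left volume t)
    have hEach2 : ∀ t : ℝ, ∫⁻ x in Set.Ioi (1:ℝ),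
        ENNReal.ofReal |K' (t + x)| * ENNReal.ofReal x⁻¹ ≤ eLpNorm K' 2 volume := by
      intro t
      refine le_trans (holder_tail' (fun x => K' (t + x))
        ((hK'cont.comp (continuous_add_left t)).aestronglyMeasurable)) (le_of_eq ?_)
      exact eLpNorm_comp_measurePreserving hK'.1 (measurePreserving_add_left volume t)
    have hJ1 := J_bound' (fun t x => K' (t - x))
      (hK'cont.comp (continuous_fst.sub continuous_snd)) x₁ x₂ _ hEach1
    have hJ2 := J_bound' (fun t x => K' (t + x))
      (hK'cont.comp (continuous_fst.add continuous_snd)) x₁ x₂ _ hEach2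
    have hTmeas : Measurable fun x' : ℝ =>
        (∫⁻ t in Set.Ioc x₁ x₂, ENNReal.ofReal |K' (t - x')|) * ENNReal.ofReal x'⁻¹ := by
      apply Measurable.fun_mul _ (measurable_inv.ennreal_ofReal)
      apply Measurable.lintegral_prod_right (f := fun x' t => ENNReal.ofReal |K' (t - x')|)
      exact ((hK'cont.comp (continuous_snd.sub continuous_fst)).abs).measurable.ennreal_ofReal
    have htailI : ∫⁻ x' in Set.Ioi (1:ℝ), ENNReal.ofReal |g x'| ≤
        ENNReal.ofReal D * ENNReal.ofReal N + ENNReal.ofReal D * ENNReal.ofReal N := by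
      calc ∫⁻ x' in Set.Ioi (1:ℝ), ENNReal.ofReal |g x'|
          ≤ ∫⁻ x' in Set.Ioi (1:ℝ),
              ((∫⁻ t in Set.Ioc x₁ x₂, ENNReal.ofReal |K' (t - x')|) * ENNReal.ofReal x'⁻¹ +
               (∫⁻ t in Set.Ioc x₁ x₂, ENNReal.ofReal |K' (t + x')|) * ENNReal.ofReal x'⁻¹) := by
            apply lintegral_mono_ae
            filter_upwards [ae_restrict_mem measurableSet_Ioi] with x' hx'
            exact htail x' hx'
        _ = (∫⁻ x' in Set.Ioi (1:ℝ),
              (∫⁻ t in Set.Ioc x₁ x₂, ENNReal.ofReal |K' (t - x')|) * ENNReal.ofReal x'⁻¹) +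
            ∫⁻ x' in Set.Ioi (1:ℝ),
              (∫⁻ t in Set.Ioc x₁ x₂, ENNReal.ofReal |K' (t + x')|) * ENNReal.ofReal x'⁻¹ :=
            lintegral_add_left hTmeas _
        _ ≤ volume (Set.Ioc x₁ x₂) * eLpNorm K' 2 volume +
            volume (Set.Ioc x₁ x₂) * eLpNorm K' 2 volume := add_le_add hJ1 hJ2
        _ = ENNReal.ofReal D * ENNReal.ofReal N + ENNReal.ofReal D * ENNReal.ofReal N := by
            rw [Real.volume_Ioc, hNe, hDdef]
    rw [hsplit]
    calc (∫⁻ x' in Set.Ioc (0:ℝ) 1, ENNReal.ofReal |g x'|) +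
        ∫⁻ x' in Set.Ioi (1:ℝ), ENNReal.ofReal |g x'|
        ≤ ENNReal.ofReal (2 * k₂ * D) +
          (ENNReal.ofReal D * ENNReal.ofReal N + ENNReal.ofReal D * ENNReal.ofReal N) :=
          add_le_add hheadI htailI
      _ = ENNReal.ofReal (2 * k₂ * D + (D * N + D * N)) := by
          rw [← ENNReal.ofReal_mul hDnn, ← ENNReal.ofReal_add (by positivity) (by positivity),
            ← ENNReal.ofReal_add (by positivity) (by positivity)]
      _ = ENNReal.ofReal (2 * (k₂ + N) * D) := by ring_nf
  -- integrability of g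
  have hgmeas : AEStronglyMeasurable g (volume.restrict (Set.Ioi (0:ℝ))) := by
    apply Measurable.aestronglyMeasurable
    apply Measurable.sub
    · exact ((hKcont.comp (continuous_const.sub continuous_id)).sub
        (hKcont.comp (continuous_const.add continuous_id))).measurable.div measurable_id
    · exact ((hKcont.comp (continuous_const.sub continuous_id)).sub
        (hKcont.comp (continuous_const.add continuous_id))).measurable.div measurable_id
  have hgInt : IntegrableOn g (Set.Ioi (0:ℝ)) volume := by
    refine ⟨hgmeas, ?_⟩
    rw [hasFiniteIntegral_iff_norm]
    have : ∀ x' : ℝ, ENNReal.ofReal ‖g x'‖ = ENNReal.ofReal |g x'| := fun x' => by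
      rw [Real.norm_eq_abs]
    simp only [this]
    exact lt_of_le_of_lt hkey ENNReal.ofReal_lt_top
  have habs : |x₂ - x₁| = D := by rw [hDdef]; exact abs_of_nonneg (by linarith)
  by_cases h₁ : IntegrableOn f₁ (Set.Ioi (0:ℝ)) volume
  · have h₂ : IntegrableOn f₂ (Set.Ioi (0:ℝ)) volume := by
      have := hgInt.add h₁
      apply this.congr
      filter_upwards with x
      simp [hg_def]
    rw [← integral_sub h₂ h₁]
    calc |∫ x' in Set.Ioi (0:ℝ), (f₂ x' - f₁ x')|
        = ‖∫ x' in Set.Ioi (0:ℝ), g x'‖ := by rw [Real.norm_eq_abs]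
      _ ≤ (∫⁻ x' in Set.Ioi (0:ℝ), ENNReal.ofReal ‖g x'‖).toReal :=
          norm_integral_le_lintegral_norm _
      _ = (∫⁻ x' in Set.Ioi (0:ℝ), ENNReal.ofReal |g x'|).toReal := by
          congr 1
      _ ≤ (ENNReal.ofReal (2 * (k₂ + N) * D)).toReal :=
          ENNReal.toReal_mono ENNReal.ofReal_ne_top hkey
      _ = 2 * (k₂ + N) * D := ENNReal.toReal_ofReal (by positivity)
      _ = 2 * (k₂ + N) * |x₂ - x₁| := by rw [habs]
  · have h₂ : ¬ IntegrableOn f₂ (Set.Ioi (0:ℝ)) volume := by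
      intro h
      apply h₁
      have := h.sub hgInt
      apply this.congr
      filter_upwards with x
      simp [hg_def]
    rw [integral_undef h₁, integral_undef h₂]
    simp only [sub_zero, abs_zero]
    positivity
end

section
/- Let V(x) = exp(-x²/2). Then the Wigner potential V_w(x,v) = (i/2π)∫exp(ivy)[V(x+y/2) - V(x-y/2)]dy equals √(8/π)·exp(-2v²)·sin(2vx). -/
/-- For the Gaussian potential `V(x) = exp(-x²/2)`, the Wigner potential
`V_w(x,v) = (i/2π) ∫ e^{ivy} [V(x+y/2) - V(x-y/2)] dy` equals
`√(8/π) exp(-2v²) sin(2vx)`. -/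
theorem stmt17 (x v : ℝ) :
    (Complex.I / (2 * Real.pi)) *
        ∫ y : ℝ, Complex.exp (Complex.I * v * y) *
          ((Real.exp (-(x + y / 2) ^ 2 / 2) : ℂ) - (Real.exp (-(x - y / 2) ^ 2 / 2) : ℂ)) =
      (Real.sqrt (8 / Real.pi) * Real.exp (-2 * v ^ 2) * Real.sin (2 * v * x) : ℝ) := by
  have hb : ((-(1/8) : ℂ)).re < 0 := by norm_num
  have hrw : ∀ y : ℝ, Complex.exp (Complex.I * v * y) *
      ((Real.exp (-(x + y / 2) ^ 2 / 2) : ℂ) - (Real.exp (-(x - y / 2) ^ 2 / 2) : ℂ)) =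
      Complex.exp ((-(1/8):ℂ) * (y:ℂ)^2 + (Complex.I*v - x/2) * y + (-(x:ℂ)^2/2)) -
      Complex.exp ((-(1/8):ℂ) * (y:ℂ)^2 + (Complex.I*v + x/2) * y + (-(x:ℂ)^2/2)) := by
    intro y
    rw [mul_sub, Complex.ofReal_exp, Complex.ofReal_exp, ← Complex.exp_add, ← Complex.exp_add]
    congr 1 <;> · push_cast; ring
  simp_rw [hrw]
  rw [MeasureTheory.integral_sub (integrable_cexp_quadratic' hb _ _) (integrable_cexp_quadratic' hb _ _),
    integral_cexp_quadratic hb, integral_cexp_quadratic hb]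
  have e1 : (-(x:ℂ)^2/2) - (Complex.I*v - x/2)^2 / (4 * (-(1/8):ℂ)) =
      ((-2*v^2 : ℝ) : ℂ) + ((-(2*v*x) : ℝ) : ℂ) * Complex.I := by
    push_cast
    linear_combination (2*(v:ℂ)^2) * Complex.I_sq
  have e2 : (-(x:ℂ)^2/2) - (Complex.I*v + x/2)^2 / (4 * (-(1/8):ℂ)) =
      ((-2*v^2 : ℝ) : ℂ) + ((2*v*x : ℝ) : ℂ) * Complex.I := by
    push_cast
    linear_combination (2*(v:ℂ)^2) * Complex.I_sq
  have hpow : ((Real.pi : ℂ) / -(-(1/8):ℂ)) ^ (1/2 : ℂ) = (Real.sqrt (8*Real.pi) : ℂ) := by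
    have h8 : ((Real.pi:ℂ) / -(-(1/8):ℂ)) = ((8*Real.pi : ℝ) : ℂ) := by push_cast; ring
    rw [h8, Real.sqrt_eq_rpow, Complex.ofReal_cpow (by positivity)]
    norm_num
  have hexp : ∀ a b : ℝ, Complex.exp ((a:ℂ) + (b:ℂ)*Complex.I) =
      (Real.exp a : ℂ) * ((Real.cos b : ℂ) + (Real.sin b : ℂ) * Complex.I) := by
    intro a b
    rw [Complex.exp_add, ← Complex.ofReal_exp, Complex.exp_mul_I,
      Complex.ofReal_cos, Complex.ofReal_sin]
  rw [e1, e2, hpow, hexp, hexp, Real.sin_neg, Real.cos_neg]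
  have hS : Real.sqrt (8*Real.pi) = Real.sqrt (8/Real.pi) * Real.pi := by
    have h : (8:ℝ)*Real.pi = (8/Real.pi) * Real.pi^2 := by
      field_simp
    rw [h, Real.sqrt_mul (by positivity), Real.sqrt_sq Real.pi_pos.le]
  rw [hS]
  have hπ : (Real.pi : ℂ) ≠ 0 := Complex.ofReal_ne_zero.mpr Real.pi_ne_zero
  have h2π : (2 * (Real.pi:ℂ)) ≠ 0 := by simp [hπ]
  rw [Complex.ofReal_mul, Complex.ofReal_mul, Complex.ofReal_mul, Complex.ofReal_neg,
    div_mul_eq_mul_div, div_eq_iff h2π]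
  linear_combination (-(2:ℂ) * (Real.pi:ℂ) * (Real.sqrt (8/Real.pi) : ℂ) *
    (Real.exp (-2*v^2) : ℂ) * (Real.sin (2*v*x) : ℂ)) * Complex.I_sq
end
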